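/- Let r, c, L > 0, let SO(2) := { R ∈ ℝ^{2×2} : RᵀR = Id, det R = 1 }, and set N := { F ∈ ℝ^{2×2} : dist(F, SO(2)) < 2r }, where dist(F, SO(2)) := inf_{R ∈ SO(2)} ‖F − R‖ with respect to the Frobenius norm. Let W : ℝ^{2×2} → ℝ be Fréchet differentiable on N with W(R) = 0 for every R ∈ SO(2) and W(F) ≥ c · dist(F, SO(2))² for every F ∈ N, and assume the derivative map F ↦ DW(F) is Lipschitz on N with constant L. Then DW(R) = 0 for every R ∈ SO(2), and for every F ∈ ℝ^{2×2} with dist(F, SO(2)) < r one has ‖DW(F)‖ ≤ (L/√c) · √(W(F)). -/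

import Mathlib

open Matrix Metric

attribute [local instance] Matrix.frobeniusNormedAddCommGroup Matrix.frobeniusNormedSpace

/-- The special orthogonal group `SO(2)` as a set of `2×2` real matrices. -/
def SO2 : Set (Matrix (Fin 2) (Fin 2) ℝ) := {R | Rᵀ * R = 1 ∧ R.det = 1}

/-- On a neighborhood of `SO(2)`, the stress `DW` is controlled by the square root of the
elastic energy density: `‖DW(F)‖ ≤ (L/√c) √(W F)` whenever `dist(F, SO(2)) < r`
(Lemma 4.1 of the paper). -/
theorem stress_bounded_by_sqrt_energy (r c L : ℝ) (hr : 0 < r) (hc : 0 < c) (hL : 0 < L)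
    (W : Matrix (Fin 2) (Fin 2) ℝ → ℝ)
    (hdiff : ∀ F : Matrix (Fin 2) (Fin 2) ℝ, infDist F SO2 < 2 * r → DifferentiableAt ℝ W F)
    (hW0 : ∀ R ∈ SO2, W R = 0)
    (hlow : ∀ F : Matrix (Fin 2) (Fin 2) ℝ, infDist F SO2 < 2 * r →
      c * infDist F SO2 ^ 2 ≤ W F)
    (hLip : ∀ F G : Matrix (Fin 2) (Fin 2) ℝ, infDist F SO2 < 2 * r → infDist G SO2 < 2 * r →
      ContinuousLinearMap.opNorm (fderiv ℝ W F - fderiv ℝ W G) ≤ L * ‖F - G‖) :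
    (∀ R ∈ SO2, fderiv ℝ W R = 0) ∧
      ∀ F : Matrix (Fin 2) (Fin 2) ℝ, infDist F SO2 < r →
        ContinuousLinearMap.opNorm (fderiv ℝ W F) ≤ L / Real.sqrt c * Real.sqrt (W F) := by
  have hSO2ne : SO2.Nonempty := ⟨1, by constructor <;> simp⟩
  have h2r : (0:ℝ) < 2 * r := by linarith
  have hzero : ∀ R ∈ SO2, fderiv ℝ W R = 0 := by
    intro R hR
    have hmin : IsLocalMin W R := by
      refine Filter.eventually_of_mem (Metric.ball_mem_nhds R h2r) fun F hF => ?_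
      have hd : infDist F SO2 < 2 * r :=
        lt_of_le_of_lt (infDist_le_dist_of_mem hR) hF
      have h1 := hlow F hd
      have h2 : (0:ℝ) ≤ infDist F SO2 := infDist_nonneg
      have := hW0 R hR
      nlinarith
    exact hmin.fderiv_eq_zero
  refine ⟨hzero, fun F hF => ?_⟩
  have hF2 : infDist F SO2 < 2 * r := by linarith
  have hd0 : (0:ℝ) ≤ infDist F SO2 := infDist_nonneg
  have hWge : c * infDist F SO2 ^ 2 ≤ W F := hlow F hF2
  have key : ContinuousLinearMap.opNorm (fderiv ℝ W F) ≤ L * infDist F SO2 := by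
    refine le_of_forall_pos_le_add fun ε hε => ?_
    have hlt : infDist F SO2 < infDist F SO2 + ε / L := by linarith [div_pos hε hL]
    obtain ⟨R, hR, hdist⟩ := (infDist_lt_iff hSO2ne).mp hlt
    have hRd : infDist R SO2 < 2 * r := by
      rw [infDist_zero_of_mem hR]; exact h2r
    have hlip := hLip F R hF2 hRd
    rw [hzero R hR, sub_zero] at hlip
    calc ContinuousLinearMap.opNorm (fderiv ℝ W F) ≤ L * ‖F - R‖ := hlip
      _ ≤ L * (infDist F SO2 + ε / L) := by
          gcongr
          rw [← dist_eq_norm]; exact hdist.le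
      _ = L * infDist F SO2 + ε := by field_simp
  have h1 : Real.sqrt c * infDist F SO2 ≤ Real.sqrt (W F) := by
    have h2 : Real.sqrt (c * infDist F SO2 ^ 2) ≤ Real.sqrt (W F) :=
      Real.sqrt_le_sqrt hWge
    rwa [Real.sqrt_mul hc.le, Real.sqrt_sq hd0] at h2
  have hsc : (0:ℝ) < Real.sqrt c := Real.sqrt_pos.mpr hc
  calc ContinuousLinearMap.opNorm (fderiv ℝ W F) ≤ L * infDist F SO2 := key
    _ ≤ L / Real.sqrt c * Real.sqrt (W F) := by
        rw [div_mul_eq_mul_div, le_div_iff₀ hsc]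
        nlinarith
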